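/- Suppose a reduced computation W_0 → W_1 → … → W_t of an S-machine S satisfying property (*) has a 2-letter base and history of the form H ≡ H_1 H_2^k H_3 with k ≥ 0. Then for the Y-projection w_i of W_i (for every i = 0, 1, …, t) one has ||w_i|| ≤ ||w_0|| + ||w_t|| + 2||H_1|| + 3||H_2|| + 2||H_3||. -/

import Mathlib

set_option linter.unusedSectionVars false

namespace SMA
open FreeGroup

variable {Y : Type} [DecidableEq Y]

/-- norm of a free group element -/
abbrev N (x : FreeGroup Y) : ℕ := x.toWord.length

lemma N_norm (x : FreeGroup Y) : N x = FreeGroup.norm x := rfl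

lemma N_inv (x : FreeGroup Y) : N x⁻¹ = N x := by
  simp [N_norm, FreeGroup.norm_inv_eq]

lemma N_mul_le (x y : FreeGroup Y) : N (x * y) ≤ N x + N y := by
  simpa [N_norm] using FreeGroup.norm_mul_le x y

lemma N_one : N (1 : FreeGroup Y) = 0 := rfl

/-- length of the longest common prefix -/
def cp : List (Y × Bool) → List (Y × Bool) → ℕ
  | a :: p, b :: q => if a = b then cp p q + 1 else 0
  | _, [] => 0
  | [], _ => 0

@[simp] lemma cp_nil_left (q : List (Y × Bool)) : cp [] q = 0 := by
  cases q <;> rfl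

@[simp] lemma cp_nil_right (p : List (Y × Bool)) : cp p [] = 0 := by
  cases p <;> rfl

lemma cp_cons (a b : Y × Bool) (p q : List (Y × Bool)) :
    cp (a :: p) (b :: q) = if a = b then cp p q + 1 else 0 := rfl

lemma cp_le_left : ∀ p q : List (Y × Bool), cp p q ≤ p.length
  | [], q => by simp
  | _ :: _, [] => by simp
  | a :: p, b :: q => by
    rw [cp_cons]
    split
    · simpa using cp_le_left p q
    · simp

lemma cp_le_right : ∀ p q : List (Y × Bool), cp p q ≤ q.length
  | [], q => by simp
  | _ :: _, [] => by simp
  | a :: p, b :: q => by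
    rw [cp_cons]
    split
    · simpa using cp_le_right p q
    · simp

/-- ultrametric inequality for longest common prefixes -/
lemma cp_ultra : ∀ p q r : List (Y × Bool), min (cp p q) (cp p r) ≤ cp q r
  | [], _, _ => by simp
  | _ :: _, [], _ => by simp
  | _ :: _, _, [] => by simp
  | a :: p, b :: q, c :: r => by
    rw [cp_cons, cp_cons, cp_cons]
    by_cases hab : a = b
    · subst hab
      by_cases hac : a = c
      · subst hac
        have := cp_ultra p q r
        simp only [if_pos rfl]
        simp
        omega
      · simp [hac]
    · simp [hab]

/-- The reducedness predicate. -/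
def IsRed (L : List (Y × Bool)) : Prop :=
  List.Chain' (fun x y => ¬(x.1 = y.1 ∧ x.2 = !y.2)) L

lemma isRed_reduce (L : List (Y × Bool)) : IsRed (reduce L) := by
  induction L with
  | nil => simp [IsRed, List.Chain']
  | cons x tl ih =>
    rw [reduce.cons]
    rcases h : reduce tl with _ | ⟨hd, tl2⟩
    · simp [IsRed, List.Chain']
    · rw [h] at ih
      by_cases hx : x.1 = hd.1 ∧ x.2 = !hd.2
      · simp only [if_pos hx]
        exact ih.tail
      · simp only [if_neg hx]
        exact List.IsChain.cons_cons hx ih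

lemma reduce_of_isRed {L : List (Y × Bool)} (h : IsRed L) : reduce L = L := by
  induction L with
  | nil => rfl
  | cons x tl ih =>
    have htl : IsRed tl := h.tail
    rw [reduce.cons, ih htl]
    rcases tl with _ | ⟨hd, tl2⟩
    · rfl
    · have hx : ¬(x.1 = hd.1 ∧ x.2 = !hd.2) := (List.isChain_cons_cons.1 h).1
      simp [hx]

lemma isRed_toWord (x : FreeGroup Y) : IsRed x.toWord := by
  have := isRed_reduce x.toWord
  rwa [FreeGroup.reduce_toWord] at this

lemma isRed_invRev {L : List (Y × Bool)} (h : IsRed L) : IsRed (invRev L) := by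
  unfold FreeGroup.invRev
  simp only [IsRed, List.Chain']
  rw [List.isChain_reverse, List.isChain_map]
  refine List.IsChain.imp ?_ h
  rintro ⟨xa, xb⟩ ⟨ya, yb⟩ hxy ⟨h1, h2⟩
  exact hxy ⟨h1.symm, by revert h2; cases xb <;> cases yb <;> simp⟩

lemma isRed_tail {x : Y × Bool} {L : List (Y × Bool)} (h : IsRed (x :: L)) : IsRed L :=
  h.tail

/-- CORE cancellation lemma -/
lemma core : ∀ (p : List (Y × Bool)) (x y : FreeGroup Y), x.toWord = p →
    N (x⁻¹ * y) + 2 * cp x.toWord y.toWord = N x + N y := by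
  intro p
  induction p with
  | nil =>
    intro x y hx
    have : x = 1 := FreeGroup.toWord_eq_nil_iff.1 hx
    subst this
    simp [N]
  | cons c p' ih =>
    intro x y hx
    rcases hq : y.toWord with _ | ⟨d, q'⟩
    · have : y = 1 := FreeGroup.toWord_eq_nil_iff.1 hq
      subst this
      simp [N_inv, N, hq]
    · rw [← hq]
      by_cases hcd : c = d
      · -- strip the common head letter
        subst hcd
        set x' : FreeGroup Y := FreeGroup.mk p' with hx'
        set y' : FreeGroup Y := FreeGroup.mk q' with hy'
        have hpx : IsRed (c :: p') := hx ▸ isRed_toWord x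
        have hqy : IsRed (c :: q') := hq ▸ isRed_toWord y
        have hx'w : x'.toWord = p' := by
          rw [hx', FreeGroup.toWord_mk, reduce_of_isRed (isRed_tail hpx)]
        have hy'w : y'.toWord = q' := by
          rw [hy', FreeGroup.toWord_mk, reduce_of_isRed (isRed_tail hqy)]
        have hxe : x = FreeGroup.mk [c] * x' := by
          rw [hx', FreeGroup.mul_mk, List.singleton_append, ← hx, FreeGroup.mk_toWord]
        have hye : y = FreeGroup.mk [c] * y' := by
          rw [hy', FreeGroup.mul_mk, List.singleton_append, ← hq, FreeGroup.mk_toWord]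
        have hmul : x⁻¹ * y = x'⁻¹ * y' := by
          rw [hxe, hye]; group
        have key := ih x' y' hx'w
        have hNx : N x = N x' + 1 := by
          rw [N, N, hx, hx'w, List.length_cons]
        have hNy : N y = N y' + 1 := by
          rw [N, N, hq, hy'w, List.length_cons]
        have hcp : cp x.toWord y.toWord = cp x'.toWord y'.toWord + 1 := by
          rw [hx, hq, hx'w, hy'w, cp_cons, if_pos rfl]
        rw [hmul, hcp, hNx, hNy]
        omega
      · -- no cancellation at all
        have hlast : (invRev (c :: p')).getLast? = some (c.1, !c.2) := by
          simp [FreeGroup.invRev]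
        have hred : IsRed (invRev x.toWord ++ y.toWord) := by
          simp only [IsRed, List.Chain']
          rw [List.isChain_append]
          refine ⟨isRed_invRev (isRed_toWord x), isRed_toWord y, ?_⟩
          intro u hu v hv
          rw [hx, hlast] at hu
          rw [hq, List.head?_cons] at hv
          have hu' : u = (c.1, !c.2) := (Option.mem_some_iff.mp hu).symm
          have hv' : v = d := (Option.mem_some_iff.mp hv).symm
          rw [hu', hv']
          rintro ⟨h1, h2⟩
          apply hcd
          have h2' : c.2 = d.2 := by simpa using h2
          exact Prod.ext h1 h2'
        have hw : (x⁻¹ * y).toWord = invRev x.toWord ++ y.toWord := by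
          conv_lhs => rw [← FreeGroup.mk_toWord (x := x), ← FreeGroup.mk_toWord (x := y)]
          rw [FreeGroup.inv_mk, FreeGroup.mul_mk, FreeGroup.toWord_mk, reduce_of_isRed hred]
        have hcp : cp x.toWord y.toWord = 0 := by rw [hx, hq, cp_cons, if_neg hcd]
        have hN : N (x⁻¹ * y) = N x + N y := by
          rw [N, hw, List.length_append, FreeGroup.invRev_length]
        rw [hN, hcp]
        omega

lemma core' (x y : FreeGroup Y) :
    N (x⁻¹ * y) + 2 * cp x.toWord y.toWord = N x + N y :=
  core x.toWord x y rfl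

/-- Gromov-product style quantity -/
def cpF (x y : FreeGroup Y) : ℕ := cp x.toWord y.toWord

lemma cpF_eq (x y : FreeGroup Y) : N (x⁻¹ * y) + 2 * cpF x y = N x + N y := core' x y

lemma N_mul (x y : FreeGroup Y) : N (x * y) + 2 * cpF x⁻¹ y = N x + N y := by
  have := cpF_eq x⁻¹ y
  rwa [inv_inv, N_inv] at this

lemma cpF_le_left (x y : FreeGroup Y) : cpF x y ≤ N x := cp_le_left _ _

lemma cpF_le_right (x y : FreeGroup Y) : cpF x y ≤ N y := cp_le_right _ _

lemma cpF_comm (x y : FreeGroup Y) : cpF x y = cpF y x := by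
  have h1 := cpF_eq x y
  have h2 := cpF_eq y x
  have h3 : N (y⁻¹ * x) = N (x⁻¹ * y) := by
    rw [← N_inv (x⁻¹ * y), mul_inv_rev, inv_inv]
  omega

lemma cpF_ultra (x y z : FreeGroup Y) : min (cpF x y) (cpF x z) ≤ cpF y z :=
  cp_ultra _ _ _

lemma cpF_self_inv {b : FreeGroup Y} (hb : N (b * b) = 2 * N b) : cpF b b⁻¹ = 0 := by
  have h := cpF_eq b b⁻¹
  have : N (b⁻¹ * b⁻¹) = N (b * b) := by
    rw [← mul_inv_rev, N_inv]
  rw [N_inv] at h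
  omega

/-- Key inequality, assuming no cancellation in `a⁻¹ * v`. -/
lemma key_ineq (a b v : FreeGroup Y) (hb : N (b * b) = 2 * N b)
    (h0 : N (a⁻¹ * v) = N a + N v) :
    2 * N v ≤ N (a * v * b) + N (a⁻¹ * v * b⁻¹) := by
  have e1 := N_mul a v
  have e2 := N_mul (a * v) b
  have e4 := N_mul (a⁻¹ * v) b⁻¹
  rw [N_inv] at e4
  set c1 := cpF a⁻¹ v with hc1
  set c3 := cpF (a * v)⁻¹ b with hc3
  set c2 := cpF (a⁻¹ * v)⁻¹ b⁻¹ with hc2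
  have hc1v : c1 ≤ N v := cpF_le_right _ _
  have hc1a : c1 ≤ N a := by
    have := cpF_le_left a⁻¹ v
    rwa [N_inv] at this
  have hc2b : c2 ≤ N b := by
    have := cpF_le_right (a⁻¹ * v)⁻¹ b⁻¹
    rwa [N_inv] at this
  have hc3b : c3 ≤ N b := cpF_le_right _ _
  by_cases hcase : c1 = N v
  · -- v fully cancels into a
    have hc3av : c3 ≤ N (a * v) := by
      have := cpF_le_left (a * v)⁻¹ b
      rwa [N_inv] at this
    rw [h0] at e4
    omega
  · have hlt : c1 < N v := lt_of_le_of_ne hc1v hcase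
    have hdisj : c2 = 0 ∨ c3 = 0 := by
      by_contra hcon
      push_neg at hcon
      obtain ⟨h2, h3⟩ := hcon
      have h2' : 1 ≤ c2 := Nat.one_le_iff_ne_zero.mpr h2
      have h3' : 1 ≤ c3 := Nat.one_le_iff_ne_zero.mpr h3
      -- bridge : the words (a*v)⁻¹ and (a⁻¹*v)⁻¹ share a first letter
      have hbr : 1 ≤ cpF (a * v)⁻¹ (a⁻¹ * v)⁻¹ := by
        have hcore := cpF_eq (a * v)⁻¹ (a⁻¹ * v)⁻¹
        have hid : ((a * v)⁻¹)⁻¹ * (a⁻¹ * v)⁻¹ = a * a := by group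
        rw [hid, N_inv, N_inv, h0] at hcore
        have haa : N (a * a) ≤ 2 * N a := by
          have := N_mul_le a a; omega
        omega
      have s1 : 1 ≤ cpF b (a⁻¹ * v)⁻¹ := by
        have := cpF_ultra (a * v)⁻¹ b (a⁻¹ * v)⁻¹
        omega
      have s2 : 1 ≤ cpF b b⁻¹ := by
        have := cpF_ultra (a⁻¹ * v)⁻¹ b b⁻¹
        rw [cpF_comm b (a⁻¹ * v)⁻¹] at s1
        omega
      have := cpF_self_inv hb
      omega
    rcases hdisj with h | h <;> omega

/-- the main inequality: convexity step for cyclically reduced a, b -/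
lemma main_ineq (a b v : FreeGroup Y) (ha : N (a * a) = 2 * N a)
    (hb : N (b * b) = 2 * N b) :
    2 * N v ≤ N (a * v * b) + N (a⁻¹ * v * b⁻¹) := by
  have hb' : N (b⁻¹ * b⁻¹) = 2 * N b⁻¹ := by
    rw [← mul_inv_rev, N_inv, N_inv, hb]
  have hdisj : cpF a v = 0 ∨ cpF a⁻¹ v = 0 := by
    by_contra hcon
    push_neg at hcon
    obtain ⟨h1, h2⟩ := hcon
    have h1' : 1 ≤ cpF v a := by rw [cpF_comm]; omega
    have h2' : 1 ≤ cpF v a⁻¹ := by rw [cpF_comm]; omega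
    have := cpF_ultra v a a⁻¹
    have := cpF_self_inv ha
    omega
  rcases hdisj with h | h
  · have h0 : N (a⁻¹ * v) = N a + N v := by
      have := cpF_eq a v
      omega
    exact key_ineq a b v hb h0
  · have h0 : N (a⁻¹⁻¹ * v) = N a⁻¹ + N v := by
      have := cpF_eq a⁻¹ v
      omega
    have := key_ineq a⁻¹ b⁻¹ v hb' h0
    rw [inv_inv, inv_inv] at this
    omega

/-- a convex integer sequence is bounded by one of its endpoints -/
lemma convex_endpoint {G : ℕ → ℤ} (h : ∀ q, 2 * G (q + 1) ≤ G q + G (q + 2)) :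
    ∀ k q, q ≤ k → G q ≤ G 0 ∨ G q ≤ G k := by
  have mono : ∀ i j, i ≤ j → G (i + 1) - G i ≤ G (j + 1) - G j := by
    intro i j hij
    induction j, hij using Nat.le_induction with
    | base => exact le_refl _
    | succ j hij ih =>
      have h2 := h j
      show G (i + 1) - G i ≤ G (j + 2) - G (j + 1)
      omega
  have dec0 : ∀ m, (∀ j, j < m → G (j + 1) - G j ≤ 0) → G m ≤ G 0 := by
    intro m
    induction m with
    | zero => intro _; exact le_refl _
    | succ m ih =>
      intro hm
      have h1 := hm m (by omega)
      have h2 := ih fun j hj => hm j (by omega)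
      omega
  intro k q hq
  by_cases hpos : ∃ j, j < q ∧ 1 ≤ G (j + 1) - G j
  · obtain ⟨j, hj, hjpos⟩ := hpos
    right
    have step : ∀ l, q ≤ l → G q ≤ G l := by
      intro l hql
      induction l, hql using Nat.le_induction with
      | base => exact le_refl _
      | succ l hql ih =>
        have hmono := mono j l (by omega)
        omega
    exact step k hq
  · push_neg at hpos
    left
    exact dec0 q fun j hj => by have := hpos j hj; omega

/-- cyclic reduction -/
lemma cyc_red : ∀ (n : ℕ) (A : FreeGroup Y), N A ≤ n →
    ∃ c abar : FreeGroup Y, A = c * abar * c⁻¹ ∧ N (abar * abar) = 2 * N abar ∧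
      2 * N c + N abar ≤ N A ∧ (N abar = 0 → N c = 0) := by
  intro n
  induction n with
  | zero =>
    intro A hA
    have hA1 : A = 1 := by
      have : A.toWord = [] := List.length_eq_zero_iff.mp (Nat.le_zero.mp hA)
      exact FreeGroup.toWord_eq_nil_iff.mp this
    subst hA1
    exact ⟨1, 1, by group, by simp [N_one], by simp [N_one], fun _ => by simp [N_one]⟩
  | succ n ih =>
    intro A hA
    by_cases h : N (A * A) = 2 * N A
    · exact ⟨1, A, by group, h, by simp [N_one], fun h0 => by simp [N_one]⟩
    · -- A is not cyclically reduced: strip a conjugating letter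
      have hlt : N (A * A) < 2 * N A := by
        have := N_mul_le A A
        omega
      have hcp : 1 ≤ cpF A⁻¹ A := by
        have := N_mul A A
        omega
      rcases hp : A.toWord with _ | ⟨c0, r⟩
      · exfalso
        have hA1 : A = 1 := FreeGroup.toWord_eq_nil_iff.mp hp
        subst hA1
        rw [one_mul] at hlt
        simp [N_one] at hlt
      · obtain ⟨g, hg⟩ : ∃ g, A.toWord.getLast? = some g := by
          rw [hp]
          exact ⟨_, List.getLast?_eq_getLast (by simp)⟩
        have hheads : (invRev A.toWord).head? = some (g.1, !g.2) := by
          rw [FreeGroup.invRev, List.head?_reverse, List.getLast?_map, hg]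
          rfl
        have hfirst : (A⁻¹.toWord).head? = some c0 := by
          rcases hq2 : A⁻¹.toWord with _ | ⟨e, s⟩
          · exfalso; rw [cpF, hq2] at hcp; simp at hcp
          · rw [cpF, hq2, hp, cp_cons] at hcp
            by_cases hec : e = c0
            · simp [hec]
            · rw [if_neg hec] at hcp; omega
        have h5 : (g.1, !g.2) = c0 := by
          rw [FreeGroup.toWord_inv, hheads] at hfirst
          exact Option.some_injective _ hfirst
        have hgc : (c0.1, !c0.2) = g := by
          rw [← h5]
          simp
        rcases hr : r with _ | ⟨r0, r1⟩
        · exfalso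
          rw [hr] at hp
          rw [hp] at hg
          have hc0g : c0 = g := by simpa using hg
          rw [← hc0g] at h5
          have h6 := congrArg Prod.snd h5
          simp at h6
        · have hrne : r ≠ [] := by rw [hr]; simp
          have hglr : r.getLast hrne = g := by
            have h1 : A.toWord.getLast? = r.getLast? := by
              rw [hp, hr]
              exact List.getLast?_cons_cons
            rw [h1, List.getLast?_eq_getLast hrne] at hg
            exact Option.some_injective _ hg
          set m := r.dropLast with hm
          have hrdec : r = m ++ [g] := by
            conv_lhs => rw [← List.dropLast_append_getLast hrne]
            rw [hglr]
          have hpdec : A.toWord = c0 :: (m ++ [(c0.1, !c0.2)]) := by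
            rw [hp, hgc]
            congr 1
            all_goals exact hrdec
          set c : FreeGroup Y := FreeGroup.mk [c0] with hc
          set A' : FreeGroup Y := FreeGroup.mk m with hA'
          have hcinv : c⁻¹ = FreeGroup.mk [(c0.1, !c0.2)] := by
            rw [hc, FreeGroup.inv_mk]
            congr 1
            all_goals simp [FreeGroup.invRev]
          have hAeq : A = c * A' * c⁻¹ := by
            rw [hc, hA', hcinv, FreeGroup.mul_mk, FreeGroup.mul_mk, ← FreeGroup.mk_toWord (x := A), hpdec]
            congr 1
            all_goals simp
          have hNc : N c = 1 := by
            rw [hc, N, FreeGroup.toWord_mk, reduce_singleton]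
            rfl
          have hNA : N A = m.length + 2 := by
            rw [N, hpdec]
            simp
          have hNA' : N A' ≤ m.length := by
            have h9 : N A' = FreeGroup.norm (FreeGroup.mk m) := rfl
            rw [h9]
            exact FreeGroup.norm_mk_le
          obtain ⟨c', abar, he, h2, h3, h4⟩ := ih A' (by omega)
          refine ⟨c * c', abar, ?_, h2, ?_, ?_⟩
          · rw [hAeq, he]; group
          · have := N_mul_le c c'
            omega
          · intro h0
            exfalso
            have habar1 : abar = 1 := by
              have h8 : abar.toWord = [] := List.length_eq_zero_iff.mp h0
              exact FreeGroup.toWord_eq_nil_iff.mp h8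
            have hA1 : A = 1 := by
              rw [hAeq, he, habar1]; group
            rw [hA1] at hNA
            simp [N_one] at hNA

/-- bound on norms along a bi-power sequence -/
lemma power_bound (A B x : FreeGroup Y) (k q : ℕ) (hq : q ≤ k) :
    N (A ^ q * x * B ^ q) ≤ N x + N (A ^ k * x * B ^ k) + N A + N B := by
  obtain ⟨c, abar, hA, ha2, haN, ha0⟩ := cyc_red (N A) A le_rfl
  obtain ⟨d, bbar, hB, hb2, hbN, hb0⟩ := cyc_red (N B) B le_rfl
  set y := c⁻¹ * x * d with hy
  have hform : ∀ r, A ^ r * x * B ^ r = c * (abar ^ r * y * bbar ^ r) * d⁻¹ := by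
    intro r
    rw [hA, hB, conj_pow, conj_pow, hy]
    group
  have hup : ∀ r, N (A ^ r * x * B ^ r) ≤ N c + N (abar ^ r * y * bbar ^ r) + N d := by
    intro r
    rw [hform r]
    calc N (c * (abar ^ r * y * bbar ^ r) * d⁻¹)
        ≤ N (c * (abar ^ r * y * bbar ^ r)) + N d⁻¹ := N_mul_le _ _
      _ ≤ N c + N (abar ^ r * y * bbar ^ r) + N d := by
          have := N_mul_le c (abar ^ r * y * bbar ^ r)
          rw [N_inv]
          omega
  have hdown : ∀ r, N (abar ^ r * y * bbar ^ r) ≤ N c + N (A ^ r * x * B ^ r) + N d := by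
    intro r
    have hid : abar ^ r * y * bbar ^ r = c⁻¹ * (A ^ r * x * B ^ r) * d := by
      rw [hform r]; group
    rw [hid]
    calc N (c⁻¹ * (A ^ r * x * B ^ r) * d)
        ≤ N (c⁻¹ * (A ^ r * x * B ^ r)) + N d := N_mul_le _ _
      _ ≤ N c + N (A ^ r * x * B ^ r) + N d := by
          have := N_mul_le c⁻¹ (A ^ r * x * B ^ r)
          rw [N_inv] at this
          omega
  have hconv : ∀ r, 2 * ((N (abar ^ (r + 1) * y * bbar ^ (r + 1)) : ℤ)) ≤
      (N (abar ^ r * y * bbar ^ r) : ℤ) + (N (abar ^ (r + 2) * y * bbar ^ (r + 2)) : ℤ) := by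
    intro r
    have hmain := main_ineq abar bbar (abar ^ (r + 1) * y * bbar ^ (r + 1)) ha2 hb2
    have hid1 : abar * (abar ^ (r + 1) * y * bbar ^ (r + 1)) * bbar =
        abar ^ (r + 2) * y * bbar ^ (r + 2) := by
      rw [pow_succ' abar (r + 1), pow_succ bbar (r + 1)]
      group
    have hid2 : abar⁻¹ * (abar ^ (r + 1) * y * bbar ^ (r + 1)) * bbar⁻¹ =
        abar ^ r * y * bbar ^ r := by
      rw [pow_succ' abar r, pow_succ bbar r]
      group
    rw [hid1, hid2] at hmain
    push_cast
    omega
  have hend := convex_endpoint hconv k q hq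
  have hx0 : A ^ 0 * x * B ^ 0 = x := by group
  have h2cd : 2 * (N c + N d) ≤ N A + N B := by
    by_cases hha : N abar = 0
    · have := ha0 hha
      by_cases hhb : N bbar = 0
      · have := hb0 hhb; omega
      · omega
    · by_cases hhb : N bbar = 0
      · have := hb0 hhb; omega
      · omega
  have hq0 := hup q
  have hd0 := hdown 0
  have hdk := hdown k
  rw [hx0] at hd0
  rcases hend with hend | hend
  · have hcast : N (abar ^ q * y * bbar ^ q) ≤ N (abar ^ 0 * y * bbar ^ 0) := by exact_mod_cast hend
    have hy0 : abar ^ 0 * y * bbar ^ 0 = y := by group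
    rw [hy0] at hcast
    have : N y ≤ N c + N x + N d := by
      have : abar ^ 0 * y * bbar ^ 0 = y := by group
      rw [this] at hd0
      omega
    omega
  · have hcast : N (abar ^ q * y * bbar ^ q) ≤ N (abar ^ k * y * bbar ^ k) := by exact_mod_cast hend
    omega

/-- norm of a product of short elements -/
lemma prod_norm_le : ∀ (l : List (FreeGroup Y)), (∀ x ∈ l, N x ≤ 1) → N l.prod ≤ l.length := by
  intro l
  induction l with
  | nil => intro _; simp [N_one]
  | cons x l ih =>
    intro h
    simp only [List.prod_cons, List.length_cons]
    have h1 := N_mul_le x l.prod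
    have h2 := h x (by simp)
    have h3 := ih fun y hy => h y (by simp [hy])
    omega

lemma flatten_replicate_length {α : Type*} (k : ℕ) (L : List α) :
    (List.replicate k L).flatten.length = k * L.length := by
  induction k with
  | zero => simp
  | succ k ih =>
    rw [List.replicate_succ, List.flatten_cons, List.length_append, ih]
    ring

lemma flatten_replicate_getElem {α : Type*} : ∀ (k q j : ℕ) (L : List α), q < k → j < L.length →
    ((List.replicate k L).flatten)[q * L.length + j]? = L[j]? := by
  intro k
  induction k with
  | zero => intro q j L hq _; omega
  | succ k ih =>
    intro q j L hq hj
    rw [List.replicate_succ, List.flatten_cons]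
    rcases q with _ | q'
    · rw [List.getElem?_append_left (by simpa using hj)]
      simp
    · have hidx : (q' + 1) * L.length + j = L.length + (q' * L.length + j) := by ring
      rw [hidx, List.getElem?_append_right (by omega)]
      have hidx2 : L.length + (q' * L.length + j) - L.length = q' * L.length + j := by omega
      rw [hidx2]
      exact ih q' j L (by omega) hj

end SMA

open SMA in
/-- Lemma `wi`.  A reduced computation with a 2-letter base of an `S`-machine satisfying
property (*) is modelled by the evolution of the `Y`-projection `w` of its configurations:
each rule `r` multiplies `w` on the left by a word `a r` and on the right by a word `b r`
of length at most `1` (property (*)), rules come in mutually inverse pairs, and the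
computation is reduced.  If the history has the form `H ≡ H₁ H₂^k H₃`, then
`‖w_i‖ ≤ ‖w_0‖ + ‖w_t‖ + 2‖H₁‖ + 3‖H₂‖ + 2‖H₃‖` for every `i`. -/
theorem sMachine_two_letter_base_length_bound
    {Y R : Type} [DecidableEq Y]
    (a b : R → FreeGroup Y)
    (hstar : ∀ r, (a r).toWord.length ≤ 1 ∧ (b r).toWord.length ≤ 1)
    (inv : R → R)
    (hinva : ∀ r, a (inv r) = (a r)⁻¹) (hinvb : ∀ r, b (inv r) = (b r)⁻¹)
    (t : ℕ) (w : Fin (t + 1) → FreeGroup Y) (hist : Fin t → R)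
    (hred : ∀ (i : ℕ) (hi : i + 1 < t),
      hist ⟨i + 1, hi⟩ ≠ inv (hist ⟨i, by omega⟩))
    (hstep : ∀ i : Fin t, w i.succ = a (hist i) * w i.castSucc * b (hist i))
    (H1 H2 H3 : List R) (k : ℕ)
    (hH : List.ofFn hist = H1 ++ (List.replicate k H2).flatten ++ H3) :
    ∀ i : Fin (t + 1),
      (w i).toWord.length ≤
        (w 0).toWord.length + (w (Fin.last t)).toWord.length +
          2 * H1.length + 3 * H2.length + 2 * H3.length := by
  classical
  intro i
  -- ℕ-indexed configuration sequence
  set W : ℕ → FreeGroup Y := fun j => if h : j ≤ t then w ⟨j, Nat.lt_succ_of_le h⟩ else 1 with hW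
  have hWv : ∀ j (hj : j ≤ t), W j = w ⟨j, Nat.lt_succ_of_le hj⟩ := by
    intro j hj
    simp only [hW]
    rw [dif_pos hj]
  -- total length
  have ht : t = H1.length + k * H2.length + H3.length := by
    have h1 := congrArg List.length hH
    rw [List.length_ofFn] at h1
    rw [h1]
    simp only [List.length_append, flatten_replicate_length]
  -- single-step relation over ℕ
  have hstepN : ∀ j (hj : j < t),
      W (j + 1) = a (hist ⟨j, hj⟩) * W j * b (hist ⟨j, hj⟩) := by
    intro j hj
    rw [hWv (j + 1) (by omega), hWv j (by omega)]
    exact hstep ⟨j, hj⟩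
  -- step bounds on norms
  have hstep2 : ∀ j, j < t →
      N (W (j + 1)) ≤ N (W j) + 2 ∧ N (W j) ≤ N (W (j + 1)) + 2 := by
    intro j hj
    have he := hstepN j hj
    set r := hist ⟨j, hj⟩ with hr
    have hNa : N (a r) ≤ 1 := (hstar r).1
    have hNb : N (b r) ≤ 1 := (hstar r).2
    constructor
    · rw [he]
      have h1 := N_mul_le (a r * W j) (b r)
      have h2 := N_mul_le (a r) (W j)
      omega
    · have hback : W j = (a r)⁻¹ * W (j + 1) * (b r)⁻¹ := by
        rw [he]; group
      rw [hback]
      have h1 := N_mul_le ((a r)⁻¹ * W (j + 1)) ((b r)⁻¹)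
      have h2 := N_mul_le ((a r)⁻¹) (W (j + 1))
      rw [N_inv] at h1 h2
      omega
  -- distance bound
  have hdist : ∀ i' j, i' ≤ j → j ≤ t →
      N (W j) ≤ N (W i') + 2 * (j - i') ∧ N (W i') ≤ N (W j) + 2 * (j - i') := by
    intro i' j hij hjt
    induction j, hij using Nat.le_induction with
    | base => omega
    | succ j hij ih =>
      have h1 := hstep2 j (by omega)
      have h2 := ih (by omega)
      have h3 : j + 1 - i' = (j - i') + 1 := by omega
      rw [h3]
      omega
  -- the segment lemma
  have hseg : ∀ (L : List R), ∀ i' : ℕ, i' + L.length ≤ t →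
      (∀ j, j < L.length → (List.ofFn hist)[i' + j]? = L[j]?) →
      W (i' + L.length) = ((L.map a).reverse.prod) * W i' * (L.map b).prod := by
    intro L
    induction L with
    | nil =>
      intro i' _ _
      simp
    | cons r L ih =>
      intro i' hlen hmatch
      simp only [List.length_cons] at hlen ⊢
      have hit : i' < t := by omega
      have h0 : hist ⟨i', hit⟩ = r := by
        have h1 := hmatch 0 (by simp)
        rw [Nat.add_zero] at h1
        rw [List.getElem?_eq_getElem (by rw [List.length_ofFn]; omega)] at h1
        rw [List.getElem_ofFn] at h1
        simp only [List.getElem?_cons_zero] at h1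
        exact Option.some_injective _ h1
      have hs1 : W (i' + 1) = a r * W i' * b r := by
        rw [hstepN i' hit, h0]
      have ihapp := ih (i' + 1) (by omega) ?_
      · have hidx : i' + (L.length + 1) = i' + 1 + L.length := by omega
        rw [hidx, ihapp, hs1]
        simp only [List.map_cons, List.reverse_cons, List.prod_append, List.prod_singleton,
          List.prod_cons, List.prod_nil, mul_one, one_mul]
        group
      · intro j hj
        have h2 := hmatch (j + 1) (by simp only [List.length_cons]; omega)
        have hidx : i' + (j + 1) = i' + 1 + j := by omega
        rw [hidx] at h2
        rw [h2]
        simp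
  -- history letters in the periodic part
  have hmatch2 : ∀ q, q < k → ∀ j, j < H2.length →
      (List.ofFn hist)[(H1.length + q * H2.length) + j]? = H2[j]? := by
    intro q hq j hj
    have hmul : (q + 1) * H2.length ≤ k * H2.length := Nat.mul_le_mul_right _ hq
    have hsucc : (q + 1) * H2.length = q * H2.length + H2.length := by ring
    rw [hH]
    rw [List.getElem?_append_left
      (by simp only [List.length_append, flatten_replicate_length]; omega)]
    rw [List.getElem?_append_right (by omega)]
    have hidx : H1.length + q * H2.length + j - H1.length = q * H2.length + j := by omega
    rw [hidx]
    exact flatten_replicate_getElem k q j H2 hq hj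
  -- per-period products
  set Aper := (H2.map a).reverse.prod with hAper
  set Bper := (H2.map b).prod with hBper
  have hNA : N Aper ≤ H2.length := by
    have h1 : N Aper ≤ ((H2.map a).reverse).length := by
      apply prod_norm_le
      intro x hx
      rw [List.mem_reverse] at hx
      obtain ⟨r, _, rfl⟩ := List.mem_map.mp hx
      exact (hstar r).1
    simpa using h1
  have hNB : N Bper ≤ H2.length := by
    have h1 : N Bper ≤ (H2.map b).length := by
      apply prod_norm_le
      intro x hx
      obtain ⟨r, _, rfl⟩ := List.mem_map.mp hx
      exact (hstar r).2
    simpa using h1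
  -- boundary values of the periodic part
  have hbound : ∀ q, q ≤ k →
      W (H1.length + q * H2.length) = Aper ^ q * W H1.length * Bper ^ q := by
    intro q
    induction q with
    | zero => intro _; simp
    | succ q ih =>
      intro hq
      have hq' : q ≤ k := by omega
      have hmul : (q + 1) * H2.length ≤ k * H2.length := Nat.mul_le_mul_right _ hq
      have hsucc : (q + 1) * H2.length = q * H2.length + H2.length := by ring
      have hlen : (H1.length + q * H2.length) + H2.length ≤ t := by omega
      have hsegapp := hseg H2 (H1.length + q * H2.length) hlen (hmatch2 q (by omega))
      rw [← hAper, ← hBper] at hsegapp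
      have hidx : H1.length + (q + 1) * H2.length = (H1.length + q * H2.length) + H2.length := by
        omega
      rw [hidx, hsegapp, ih hq', pow_succ' Aper q, pow_succ Bper q]
      group
  -- translate the goal
  have hiv : i.val ≤ t := by omega
  have hwi : w i = W i.val := by
    rw [hWv i.val hiv]
  have hw0 : w 0 = W 0 := by
    rw [hWv 0 (by omega)]
    exact congrArg w (Fin.ext (by simp))
  have hwt : w (Fin.last t) = W t := by
    rw [hWv t le_rfl]
    exact congrArg w (Fin.ext (by simp))
  show N (w i) ≤ N (w 0) + N (w (Fin.last t)) + 2 * H1.length + 3 * H2.length + 2 * H3.length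
  rw [hwi, hw0, hwt]
  by_cases hc1 : i.val ≤ H1.length
  · have h1 := (hdist 0 i.val (by omega) hiv).1
    omega
  by_cases hc2 : H1.length + k * H2.length ≤ i.val
  · have h1 := (hdist i.val t hiv le_rfl).2
    omega
  · push_neg at hc1 hc2
    have hpp : 0 < H2.length := by
      by_contra hz
      push_neg at hz
      have h0 : H2.length = 0 := by omega
      rw [h0, Nat.mul_zero] at hc2
      omega
    set d := i.val - H1.length with hd
    set q := d / H2.length with hqdef
    set s := d % H2.length with hsdef
    have hds : H2.length * q + s = d := Nat.div_add_mod d H2.length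
    have hds' : q * H2.length + s = d := by rw [Nat.mul_comm] at hds; exact hds
    have hslt : s < H2.length := Nat.mod_lt _ hpp
    have hdk : d < k * H2.length := by omega
    have hqk : q < k := by
      by_contra hcon
      push_neg at hcon
      have h1 : k * H2.length ≤ q * H2.length := Nat.mul_le_mul_right _ hcon
      omega
    have hq1k : q + 1 ≤ k := hqk
    have hsucc : (q + 1) * H2.length = q * H2.length + H2.length := by ring
    have hmul : (q + 1) * H2.length ≤ k * H2.length := Nat.mul_le_mul_right _ hq1k
    have hb_q := hbound q (by omega)
    have hb_q1 := hbound (q + 1) hq1k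
    have hb_k := hbound k le_rfl
    have hiq : i.val = H1.length + q * H2.length + s := by omega
    have hle1 : H1.length + q * H2.length ≤ i.val := by omega
    have hle2 : i.val ≤ H1.length + (q + 1) * H2.length := by omega
    have htq1 : H1.length + (q + 1) * H2.length ≤ t := by omega
    have hd1 := (hdist (H1.length + q * H2.length) i.val hle1 hiv).1
    have hd2 := (hdist i.val (H1.length + (q + 1) * H2.length) hle2 htq1).2
    have hd3 := (hdist 0 H1.length (by omega) (by omega)).1
    have hd4 := (hdist (H1.length + k * H2.length) t (by omega) le_rfl).2
    have hpb1 := power_bound Aper Bper (W H1.length) k q (by omega)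
    have hpb2 := power_bound Aper Bper (W H1.length) k (q + 1) hq1k
    rw [← hb_q, ← hb_k] at hpb1
    rw [← hb_q1, ← hb_k] at hpb2
    omega
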